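/- arXiv:1612.04476 — 2 statements merged into one kernel-verified Lean document; each statement's English description precedes it below -/
import Mathlib

section
/- Let n ≥ 4, 1 < k < n−1, with n − k even, and let ρ = φτ where τ = (1 2 ... n) and φ reverses {1,...,k}. Then τρ^{n−k} equals the consecutive k-cycle (1 2 ... k). -/
/-- The flip of the oval track puzzle: reverses the block of the first `k`
positions (0-indexed `0,…,k-1`, i.e. tiles `1,…,k`) and fixes the rest. -/
def otFlip (n k : ℕ) : Equiv.Perm (Fin n) :=
  Function.Involutive.toPerm
    (fun i => if h : i.val < k ∧ k ≤ n then ⟨k - 1 - i.val, by omega⟩ else i)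
    (by
      intro i
      dsimp only
      by_cases h1 : i.val < k ∧ k ≤ n
      · rw [dif_pos h1]
        rw [dif_pos (show (⟨k - 1 - i.val, by omega⟩ : Fin n).val < k ∧ k ≤ n from
          ⟨by simp; omega, h1.2⟩)]
        exact Fin.ext (by simp; omega)
      · rw [dif_neg h1, dif_neg h1])

/-- The cycle on `Fin n` given (0-indexed) by a list of natural numbers. -/
def otCycle (n : ℕ) (l : List ℕ) : Equiv.Perm (Fin n) :=
  (l.filterMap (fun a => if h : a < n then some ⟨a, h⟩ else none)).formPerm

/-- Type I: preserves the parity of every tile label. -/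
def TypeI (n : ℕ) (σ : Equiv.Perm (Fin n)) : Prop :=
  ∀ i : Fin n, (σ i).val % 2 = i.val % 2

/-- Type II: reverses the parity of every tile label. -/
def TypeII (n : ℕ) (σ : Equiv.Perm (Fin n)) : Prop :=
  ∀ i : Fin n, (σ i).val % 2 ≠ i.val % 2


lemma otFlip_val (n k : ℕ) (i : Fin n) :
    ((otFlip n k) i).val = if i.val < k ∧ k ≤ n then k - 1 - i.val else i.val := by
  show ((if h : i.val < k ∧ k ≤ n then (⟨k - 1 - i.val, by omega⟩ : Fin n) else i)).val = _
  split <;> simp_all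

lemma rho_val (n k : ℕ) (hn : 4 ≤ n) (hk1 : 1 < k) (hk2 : k < n - 1) (i : Fin n) :
    ((otFlip n k * finRotate n) i).val =
      if i.val = n - 1 then k - 1 else if i.val + 1 < k then k - 2 - i.val else i.val + 1 := by
  rcases n with _ | N
  · omega
  have hv := i.isLt
  rw [Equiv.Perm.mul_apply, otFlip_val, coe_finRotate]
  by_cases hL : i = Fin.last N
  · have hvl : i.val = N := by rw [hL]; rfl
    simp only [if_pos hL]
    split <;> (try split) <;> (try split) <;> omega
  · have hvl : i.val ≠ N := fun h => hL (Fin.ext h)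
    simp only [if_neg hL]
    split <;> (try split) <;> (try split) <;> omega

lemma rho_pow_even (n k : ℕ) (hn : 4 ≤ n) (hk1 : 1 < k) (hk2 : k < n - 1)
    (t : ℕ) (i : Fin n) (hi : i.val + 1 < k) :
    ((otFlip n k * finRotate n) ^ (2 * t)) i = i := by
  set ρ := otFlip n k * finRotate n with hρ
  have hv := i.isLt
  have h1 : (ρ i).val = k - 2 - i.val := by
    rw [rho_val n k hn hk1 hk2, if_neg (by omega), if_pos (by omega)]
  have h2 : ρ (ρ i) = i := by
    apply Fin.ext
    rw [rho_val n k hn hk1 hk2, h1, if_neg (by omega), if_pos (by omega)]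
    omega
  induction t with
  | zero => simp
  | succ t ih =>
    rw [show 2 * (t + 1) = 2 * t + 2 from by ring, pow_add, pow_two,
      Equiv.Perm.mul_apply, Equiv.Perm.mul_apply, h2, ih]

lemma rho_pow_cycle (n k : ℕ) (hn : 4 ≤ n) (hk1 : 1 < k) (hk2 : k < n - 1)
    (j : ℕ) (i : Fin n) (hi : k - 1 ≤ i.val) :
    (((otFlip n k * finRotate n) ^ j) i).val
      = k - 1 + (i.val - (k - 1) + j) % (n - k + 1) := by
  have hv := i.isLt
  induction j with
  | zero =>
    rw [pow_zero, Nat.add_zero, Nat.mod_eq_of_lt (by omega)]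
    simp; omega
  | succ j ih =>
    set ρ := otFlip n k * finRotate n with hρ
    have hr : (i.val - (k - 1) + j) % (n - k + 1) < n - k + 1 :=
      Nat.mod_lt _ (by omega)
    rw [pow_succ', Equiv.Perm.mul_apply, rho_val n k hn hk1 hk2, ih]
    have hmod : (i.val - (k - 1) + (j + 1)) % (n - k + 1)
        = ((i.val - (k - 1) + j) % (n - k + 1) + 1) % (n - k + 1) := by
      rw [show i.val - (k - 1) + (j + 1) = (i.val - (k - 1) + j) + 1 from rfl,
        Nat.add_mod (i.val - (k - 1) + j) 1,
        Nat.mod_eq_of_lt (show 1 < n - k + 1 by omega)]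
    by_cases hR : (i.val - (k - 1) + j) % (n - k + 1) = n - k
    · have h0 : (i.val - (k - 1) + (j + 1)) % (n - k + 1) = 0 := by
        rw [hmod, hR, Nat.mod_self]
      rw [if_pos (by omega), h0]
      omega
    · have h0 : (i.val - (k - 1) + (j + 1)) % (n - k + 1)
          = (i.val - (k - 1) + j) % (n - k + 1) + 1 := by
        rw [hmod, Nat.mod_eq_of_lt (by omega)]
      rw [if_neg (by omega), if_neg (by omega), h0]
      omega

lemma otList_eq (n k : ℕ) (hkn : k ≤ n) :
    (List.range k).filterMap (fun a => if h : a < n then some (⟨a, h⟩ : Fin n) else none)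
      = (List.range k).pmap (fun a h => (⟨a, h⟩ : Fin n))
          (fun a ha => lt_of_lt_of_le (List.mem_range.mp ha) hkn) := by
  induction k with
  | zero => simp
  | succ k ih =>
    simp only [List.range_succ, List.filterMap_append, List.pmap_append]
    congr 1
    · exact ih (by omega)
    · simp [show k < n from by omega]


theorem stmt11 (n k : ℕ) (hn : 4 ≤ n) (hk1 : 1 < k) (hk2 : k < n - 1)
    (hnk : Even (n - k)) :
    finRotate n * (otFlip n k * finRotate n) ^ (n - k) = otCycle n (List.range k) := by
  rcases n with _ | N
  · omega
  set n := N + 1 with hnN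
  have hkn : k ≤ n := by omega
  rw [otCycle, otList_eq n k hkn]
  set L : List (Fin n) := (List.range k).pmap (fun a h => (⟨a, h⟩ : Fin n))
    (fun a ha => lt_of_lt_of_le (List.mem_range.mp ha) hkn) with hL
  have hlen : L.length = k := by
    rw [hL, List.length_pmap, List.length_range]
  have hnodup : L.Nodup := by
    refine List.Nodup.pmap ?_ List.nodup_range
    intro a ha b hb h
    simpa using congrArg Fin.val h
  have hget : ∀ (j : ℕ) (hj : j < k), L[j]'(by rw [hlen]; exact hj) = ⟨j, by omega⟩ := by
    intro j hj
    apply Fin.ext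
    simp only [hL, List.getElem_pmap, List.getElem_range]
  have hform : ∀ (j : ℕ) (hj : j < k),
      L.formPerm ⟨j, by omega⟩
        = ⟨(j + 1) % k, by have := Nat.mod_lt (j + 1) (show 0 < k by omega); omega⟩ := by
    intro j hj
    have h1 : (⟨j, by omega⟩ : Fin n) = L[j]'(by rw [hlen]; exact hj) := (hget j hj).symm
    rw [h1, List.formPerm_apply_getElem L hnodup j (by rw [hlen]; exact hj)]
    simp only [hlen]
    exact hget ((j + 1) % k) (Nat.mod_lt _ (by omega))
  have hτ : ∀ x : Fin n, ((finRotate n) x).val = if x.val = N then 0 else x.val + 1 := by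
    intro x
    rw [coe_finRotate]
    by_cases h : x.val = N
    · rw [if_pos (Fin.ext h : x = Fin.last N), if_pos h]
    · rw [if_neg (fun hh => h (congrArg Fin.val hh)), if_neg h]
  ext i
  rw [Equiv.Perm.mul_apply]
  have hv := i.isLt
  by_cases h1 : i.val + 1 < k
  · obtain ⟨t, ht⟩ := hnk
    have he : (((otFlip n k * finRotate n) ^ (n - k)) i) = i := by
      rw [show n - k = 2 * t from by omega]
      exact rho_pow_even n k hn hk1 hk2 t i h1
    rw [he]
    have hfi := hform i.val (by omega)
    rw [Fin.eta] at hfi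
    rw [hfi, hτ, if_neg (by omega)]
    show i.val + 1 = (i.val + 1) % k
    rw [Nat.mod_eq_of_lt (by omega)]
  by_cases h2 : i.val < k
  · -- i.val = k - 1
    have hval : (((otFlip n k * finRotate n) ^ (n - k)) i).val = N := by
      rw [rho_pow_cycle n k hn hk1 hk2 (n - k) i (by omega)]
      rw [show i.val - (k - 1) = 0 from by omega, Nat.zero_add,
        Nat.mod_eq_of_lt (by omega)]
      omega
    have hi : i = ⟨k - 1, by omega⟩ := Fin.ext (show i.val = k - 1 by omega)
    rw [hτ, if_pos hval, hi, hform (k - 1) (by omega)]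
    show 0 = (k - 1 + 1) % k
    rw [show k - 1 + 1 = k from by omega, Nat.mod_self]
  · -- i.val ≥ k
    have hval : (((otFlip n k * finRotate n) ^ (n - k)) i).val = i.val - 1 := by
      rw [rho_pow_cycle n k hn hk1 hk2 (n - k) i (by omega)]
      rw [show i.val - (k - 1) + (n - k) = (i.val - k) + (n - k + 1) from by omega,
        Nat.add_mod_right, Nat.mod_eq_of_lt (by omega)]
      omega
    have hnotmem : i ∉ L := by
      intro hm
      rw [hL, List.mem_pmap] at hm
      obtain ⟨a, ha, he⟩ := hm
      have h3 := congrArg Fin.val he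
      have h4 := List.mem_range.mp ha
      simp at h3
      omega
    rw [List.formPerm_apply_of_notMem hnotmem, hτ, if_neg (by omega)]
    omega
end

section
/- Let n ≥ 4 be even and 1 < k < n−1 be odd. Then the 3-cycle (1 3 5) lies in the subgroup OT_{n,k} of S_n generated by τ = (1 2 ... n) and the flip φ reversing {1,...,k}. -/
section OTAux

/-- A 3-cycle `a → b → c → a` (when `a,b,c` are distinct). -/
def trip {n : ℕ} (a b c : Fin n) : Equiv.Perm (Fin n) := Equiv.swap a b * Equiv.swap b c

lemma fin_val_mk {n : ℕ} (a : ℕ) (h : a < n) : (⟨a, h⟩ : Fin n).val = a := rfl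

lemma trip_val {n : ℕ} (a b c x : Fin n) : ((trip a b c) x).val =
    if (if x.val = b.val then c.val else if x.val = c.val then b.val else x.val) = a.val then b.val
    else if (if x.val = b.val then c.val else if x.val = c.val then b.val else x.val) = b.val then a.val
    else (if x.val = b.val then c.val else if x.val = c.val then b.val else x.val) := by
  simp only [trip, Equiv.Perm.mul_apply, Equiv.swap_apply_def, Fin.ext_iff, apply_ite Fin.val]

lemma trip_or {n : ℕ} (a b c x : Fin n) (hab : a.val ≠ b.val) (hbc : b.val ≠ c.val)
    (hac : a.val ≠ c.val) :
    (x.val = a.val ∧ ((trip a b c) x).val = b.val) ∨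
    (x.val = b.val ∧ ((trip a b c) x).val = c.val) ∨
    (x.val = c.val ∧ ((trip a b c) x).val = a.val) ∨
    (x.val ≠ a.val ∧ x.val ≠ b.val ∧ x.val ≠ c.val ∧ ((trip a b c) x).val = x.val) := by
  have h := trip_val a b c x
  split_ifs at h <;> omega

lemma tau_val (m : ℕ) (x : Fin (m+1)) :
    ((finRotate (m+1)) x).val = if x.val = m then 0 else x.val + 1 := by
  rw [finRotate_succ_apply, Fin.val_add_one]
  by_cases h : x = Fin.last m
  · simp [h]
  · rw [if_neg h, if_neg (by simpa [Fin.ext_iff] using h)]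

lemma tau_or (m : ℕ) (x : Fin (m+1)) :
    (x.val = m ∧ ((finRotate (m+1)) x).val = 0) ∨
    (x.val ≠ m ∧ ((finRotate (m+1)) x).val = x.val + 1) := by
  have h := tau_val m x
  split_ifs at h <;> omega

lemma tauinv_val (m : ℕ) (x : Fin (m+1)) :
    (((finRotate (m+1))⁻¹) x).val = if x.val = 0 then m else x.val - 1 := by
  have h := congrArg Fin.val (show finRotate (m+1) ((finRotate (m+1))⁻¹ x) = x from Equiv.apply_symm_apply _ x)
  rw [tau_val] at h
  have hlt : (((finRotate (m+1))⁻¹) x).val < m + 1 := (((finRotate (m+1))⁻¹) x).isLt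
  have hlt2 : x.val < m + 1 := x.isLt
  split_ifs at h ⊢ <;> omega

lemma tauinv_or (m : ℕ) (x : Fin (m+1)) :
    (x.val = 0 ∧ (((finRotate (m+1))⁻¹) x).val = m) ∨
    (x.val ≠ 0 ∧ (((finRotate (m+1))⁻¹) x).val = x.val - 1) := by
  have h := tauinv_val m x
  split_ifs at h <;> omega

lemma permExt {n : ℕ} (f g : Equiv.Perm (Fin n)) (h : ∀ x : Fin n, (f x).val = (g x).val) :
    f = g := Equiv.ext fun x => Fin.val_injective (h x)

lemma conj_trip {n : ℕ} (π : Equiv.Perm (Fin n)) (a b c : Fin n) :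
    π * trip a b c * π⁻¹ = trip (π a) (π b) (π c) := by
  unfold trip
  rw [Equiv.swap_apply_apply, Equiv.swap_apply_apply]
  group

/-- `(A C D) * (A B C) = (A B D)` for distinct `A B C D`. -/
lemma trip_I1 {n : ℕ} (A B C D : Fin n)
    (hAB : A.val ≠ B.val) (hAC : A.val ≠ C.val) (hAD : A.val ≠ D.val)
    (hBC : B.val ≠ C.val) (hBD : B.val ≠ D.val) (hCD : C.val ≠ D.val) :
    trip A C D * trip A B C = trip A B D := by
  apply permExt; intro x
  simp only [Equiv.Perm.mul_apply]
  have hbx := x.isLt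
  have h1 := trip_or A B C x hAB hBC hAC
  have h2 := trip_or A C D ((trip A B C) x) hAC hCD hAD
  have h3 := trip_or A B D x hAB hBD hAD
  omega

/-- `(A B C) * (A C D) = (B C D)` for distinct `A B C D`. -/
lemma trip_I2 {n : ℕ} (A B C D : Fin n)
    (hAB : A.val ≠ B.val) (hAC : A.val ≠ C.val) (hAD : A.val ≠ D.val)
    (hBC : B.val ≠ C.val) (hBD : B.val ≠ D.val) (hCD : C.val ≠ D.val) :
    trip A B C * trip A C D = trip B C D := by
  apply permExt; intro x
  simp only [Equiv.Perm.mul_apply]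
  have hbx := x.isLt
  have h1 := trip_or A C D x hAC hCD hAD
  have h2 := trip_or A B C ((trip A C D) x) hAB hBC hAC
  have h3 := trip_or B C D x hBC hCD hBD
  omega

lemma trip_mul_inv {n : ℕ} (a b c : Fin n) (hab : a.val ≠ b.val) (hbc : b.val ≠ c.val)
    (hac : a.val ≠ c.val) : trip a b c * trip a c b = 1 := by
  apply permExt; intro x
  simp only [Equiv.Perm.mul_apply, Equiv.Perm.one_apply]
  have h1 := trip_or a c b x hac (fun h => hbc h.symm) hab
  have h2 := trip_or a b c ((trip a c b) x) hab hbc hac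
  omega

lemma trip_inv {n : ℕ} (a b c : Fin n) (hab : a.val ≠ b.val) (hbc : b.val ≠ c.val)
    (hac : a.val ≠ c.val) : (trip a b c)⁻¹ = trip a c b :=
  inv_eq_of_mul_eq_one_right (trip_mul_inv a b c hab hbc hac)

end OTAux

lemma phi_val (n k : ℕ) (hkn : k ≤ n) (x : Fin n) :
    ((otFlip n k) x).val = if x.val < k then k - 1 - x.val else x.val := by
  have h0 : (otFlip n k) x = if h : x.val < k ∧ k ≤ n then ⟨k - 1 - x.val, by omega⟩ else x := rfl
  rw [h0]
  split_ifs with h1 h2 h3 <;> first | rfl | omega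

lemma phi_or (n k : ℕ) (hkn : k ≤ n) (x : Fin n) :
    (x.val < k ∧ ((otFlip n k) x).val = k - 1 - x.val) ∨
    (¬ x.val < k ∧ ((otFlip n k) x).val = x.val) := by
  have h := phi_val n k hkn x
  split_ifs at h <;> omega

lemma nu_eq (m k : ℕ) (hk1 : 1 < k) (hk3 : k + 2 ≤ m) :
    finRotate (m+1) * otFlip (m+1) k * finRotate (m+1) * otFlip (m+1) k *
      (finRotate (m+1))⁻¹ * otFlip (m+1) k * (finRotate (m+1))⁻¹ * otFlip (m+1) k
    = trip ⟨0, by omega⟩ ⟨k+1, by omega⟩ ⟨k-1, by omega⟩ := by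
  have hkn : k ≤ m + 1 := by omega
  apply permExt; intro x
  simp only [Equiv.Perm.mul_apply]
  have hb0 := x.isLt
  have h1 := phi_or (m+1) k hkn x
  set y1 := (otFlip (m+1) k) x with hy1
  have hb1 := y1.isLt
  have h2 := tauinv_or m y1
  set y2 := ((finRotate (m+1))⁻¹) y1 with hy2
  have hb2 := y2.isLt
  have h3 := phi_or (m+1) k hkn y2
  set y3 := (otFlip (m+1) k) y2 with hy3
  have hb3 := y3.isLt
  have h4 := tauinv_or m y3
  set y4 := ((finRotate (m+1))⁻¹) y3 with hy4
  have hb4 := y4.isLt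
  have h5 := phi_or (m+1) k hkn y4
  set y5 := (otFlip (m+1) k) y4 with hy5
  have hb5 := y5.isLt
  have h6 := tau_or m y5
  set y6 := (finRotate (m+1)) y5 with hy6
  have hb6 := y6.isLt
  have h7 := phi_or (m+1) k hkn y6
  set y7 := (otFlip (m+1) k) y6 with hy7
  have hb7 := y7.isLt
  have h8 := tau_or m y7
  have h9 := trip_or (⟨0, by omega⟩ : Fin (m+1)) ⟨k+1, by omega⟩ ⟨k-1, by omega⟩ x
    (by simp only [fin_val_mk, eq_self_iff_true, and_true, true_and, or_true, true_or, ne_eq]; try omega) (by simp only [fin_val_mk, eq_self_iff_true, and_true, true_and, or_true, true_or, ne_eq]; try omega)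
    (by simp only [fin_val_mk, eq_self_iff_true, and_true, true_and, or_true, true_or, ne_eq]; try omega)
  simp only [fin_val_mk] at h9
  omega

lemma trip_pt {n : ℕ} (a b c x y : Fin n) (hab : a.val ≠ b.val) (hbc : b.val ≠ c.val)
    (hac : a.val ≠ c.val)
    (h : (x.val = a.val ∧ y.val = b.val) ∨ (x.val = b.val ∧ y.val = c.val) ∨
      (x.val = c.val ∧ y.val = a.val) ∨
      (x.val ≠ a.val ∧ x.val ≠ b.val ∧ x.val ≠ c.val ∧ y.val = x.val)) :
    trip a b c x = y := by
  apply Fin.val_injective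
  have h2 := trip_or a b c x hab hbc hac
  omega

lemma trip_rot {n : ℕ} (a b c : Fin n) (hab : a.val ≠ b.val) (hbc : b.val ≠ c.val)
    (hac : a.val ≠ c.val) : trip a b c = trip c a b := by
  apply permExt; intro x
  have h1 := trip_or a b c x hab hbc hac
  have h2 := trip_or c a b x (Ne.symm hac) hab (fun h => hbc h.symm)
  omega

lemma tau2_apply (m v w : ℕ) (hv : v < m+1) (hw : w < m+1)
    (hvw : v + 2 = w ∨ v + 2 = w + (m+1)) :
    (finRotate (m+1) * finRotate (m+1)) ⟨v, hv⟩ = ⟨w, hw⟩ := by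
  apply Fin.val_injective
  simp only [Equiv.Perm.mul_apply, tau_val, fin_val_mk]
  split_ifs <;> omega

lemma tau2inv_apply (m v w : ℕ) (hv : v < m+1) (hw : w < m+1)
    (hvw : w + 2 = v ∨ w + 2 = v + (m+1)) :
    ((finRotate (m+1) * finRotate (m+1))⁻¹) ⟨v, hv⟩ = ⟨w, hw⟩ := by
  apply Fin.val_injective
  rw [mul_inv_rev]
  simp only [Equiv.Perm.mul_apply, tauinv_val, fin_val_mk]
  split_ifs <;> omega

lemma tau4_apply (m v w : ℕ) (hv : v < m+1) (hw : w < m+1)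
    (hvw : v + 4 = w ∨ v + 4 = w + (m+1)) :
    (finRotate (m+1) * finRotate (m+1) * finRotate (m+1) * finRotate (m+1)) ⟨v, hv⟩
      = ⟨w, hw⟩ := by
  apply Fin.val_injective
  simp only [Equiv.Perm.mul_apply, tau_val, fin_val_mk]
  split_ifs <;> omega

theorem stmt16 (n k : ℕ) (hn : 4 ≤ n) (hne : Even n) (hk1 : 1 < k)
    (hk2 : k < n - 1) (hko : Odd k) :
    otCycle n [0, 2, 4] ∈ Subgroup.closure {finRotate n, otFlip n k} := by
  obtain ⟨m, rfl⟩ : ∃ m, n = m + 1 := ⟨n - 1, by omega⟩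
  have hm2 : (m + 1) % 2 = 0 := Nat.even_iff.mp hne
  have hkodd : k % 2 = 1 := Nat.odd_iff.mp hko
  have hk3 : 3 ≤ k := by omega
  have hkm : k + 2 ≤ m := by omega
  have hm5 : 5 ≤ m := by omega
  set H := Subgroup.closure {finRotate (m+1), otFlip (m+1) k} with hH
  have hT : finRotate (m+1) ∈ H := Subgroup.subset_closure (Set.mem_insert _ _)
  have hΦ : otFlip (m+1) k ∈ H := Subgroup.subset_closure (Set.mem_insert_of_mem _ rfl)
  have hπ2 : finRotate (m+1) * finRotate (m+1) ∈ H := H.mul_mem hT hT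
  -- the goal is the 3-cycle (0 2 4)
  have hgoal : otCycle (m+1) [0, 2, 4]
      = trip ⟨0, by omega⟩ ⟨2, by omega⟩ ⟨4, by omega⟩ := by
    unfold otCycle
    have e : List.filterMap (fun a => if h : a < m + 1 then some (⟨a, h⟩ : Fin (m+1)) else none)
        [0, 2, 4] = [⟨0, by omega⟩, ⟨2, by omega⟩, ⟨4, by omega⟩] := by
      simp only [List.filterMap_cons, List.filterMap_nil]
      rw [dif_pos (by omega : (0:ℕ) < m+1), dif_pos (by omega : (2:ℕ) < m+1),
        dif_pos (by omega : (4:ℕ) < m+1)]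
    rw [e, List.formPerm_cons_cons, List.formPerm_cons_cons,
        List.formPerm_singleton, mul_one]
    rfl
  rw [hgoal]
  -- the basic 3-cycle ν = (0, k+1, k-1)
  have hν : trip ⟨0, by omega⟩ ⟨k+1, by omega⟩ ⟨k-1, by omega⟩ ∈ H := by
    have h := H.mul_mem (H.mul_mem (H.mul_mem (H.mul_mem (H.mul_mem (H.mul_mem
      (H.mul_mem hT hΦ) hT) hΦ) (H.inv_mem hT)) hΦ) (H.inv_mem hT)) hΦ
    rwa [nu_eq m k hk1 hkm] at h
  have hx : trip ⟨0, by omega⟩ ⟨k-1, by omega⟩ ⟨k+1, by omega⟩ ∈ H := by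
    have h := H.inv_mem hν
    rwa [trip_inv _ _ _ (by simp only [fin_val_mk, eq_self_iff_true, and_true, true_and, or_true, true_or, ne_eq]; try omega) (by simp only [fin_val_mk, eq_self_iff_true, and_true, true_and, or_true, true_or, ne_eq]; try omega)
      (by simp only [fin_val_mk, eq_self_iff_true, and_true, true_and, or_true, true_or, ne_eq]; try omega)] at h
  by_cases hc3 : k = 3
  · subst hc3
    exact hx
  by_cases hclast : k + 3 = m + 1
  · -- k = n - 3 : just shift by 4
    have hπ4 : finRotate (m+1) * finRotate (m+1) * finRotate (m+1) * finRotate (m+1) ∈ H :=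
      H.mul_mem (H.mul_mem hπ2 hT) hT
    have h := H.mul_mem (H.mul_mem hπ4 hx) (H.inv_mem hπ4)
    rw [conj_trip,
      tau4_apply m 0 4 (by omega) (by omega) (by omega),
      tau4_apply m (k-1) 0 (by omega) (by omega) (by omega),
      tau4_apply m (k+1) 2 (by omega) (by omega) (by omega)] at h
    rwa [trip_rot _ _ _ (by simp only [fin_val_mk, eq_self_iff_true, and_true, true_and, or_true, true_or, ne_eq]; try omega) (by simp only [fin_val_mk, eq_self_iff_true, and_true, true_and, or_true, true_or, ne_eq]; try omega)
        (by simp only [fin_val_mk, eq_self_iff_true, and_true, true_and, or_true, true_or, ne_eq]; try omega),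
      trip_rot _ _ _ (by simp only [fin_val_mk, eq_self_iff_true, and_true, true_and, or_true, true_or, ne_eq]; try omega) (by simp only [fin_val_mk, eq_self_iff_true, and_true, true_and, or_true, true_or, ne_eq]; try omega)
        (by simp only [fin_val_mk, eq_self_iff_true, and_true, true_and, or_true, true_or, ne_eq]; try omega)] at h
  · -- middle case : 5 ≤ k ≤ m - 4
    have hk5 : 5 ≤ k := by omega
    have hkm4 : k + 4 ≤ m := by omega
    -- xm = (m-1, k-3, k-1)
    have hxm : trip ⟨m-1, by omega⟩ ⟨k-3, by omega⟩ ⟨k-1, by omega⟩ ∈ H := by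
      have h := H.mul_mem (H.mul_mem (H.inv_mem hπ2) hx) (H.inv_mem (H.inv_mem hπ2))
      rwa [conj_trip,
        tau2inv_apply m 0 (m-1) (by omega) (by omega) (by omega),
        tau2inv_apply m (k-1) (k-3) (by omega) (by omega) (by omega),
        tau2inv_apply m (k+1) (k-1) (by omega) (by omega) (by omega)] at h
    -- y = xm * ν * xm⁻¹ = (0, k+1, m-1)
    have hy : trip ⟨0, by omega⟩ ⟨k+1, by omega⟩ ⟨m-1, by omega⟩ ∈ H := by
      have h := H.mul_mem (H.mul_mem hxm hν) (H.inv_mem hxm)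
      rwa [conj_trip,
        trip_pt (⟨m-1, by omega⟩ : Fin (m+1)) ⟨k-3, by omega⟩ ⟨k-1, by omega⟩ ⟨0, by omega⟩ ⟨0, by omega⟩ (by simp only [fin_val_mk, eq_self_iff_true, and_true, true_and, or_true, true_or, ne_eq]; try omega)
          (by simp only [fin_val_mk, eq_self_iff_true, and_true, true_and, or_true, true_or, ne_eq]; try omega) (by simp only [fin_val_mk, eq_self_iff_true, and_true, true_and, or_true, true_or, ne_eq]; try omega)
          (by simp only [fin_val_mk, eq_self_iff_true, and_true, true_and, or_true, true_or, ne_eq]; try omega),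
        trip_pt (⟨m-1, by omega⟩ : Fin (m+1)) ⟨k-3, by omega⟩ ⟨k-1, by omega⟩ ⟨k+1, by omega⟩ ⟨k+1, by omega⟩ (by simp only [fin_val_mk, eq_self_iff_true, and_true, true_and, or_true, true_or, ne_eq]; try omega)
          (by simp only [fin_val_mk, eq_self_iff_true, and_true, true_and, or_true, true_or, ne_eq]; try omega) (by simp only [fin_val_mk, eq_self_iff_true, and_true, true_and, or_true, true_or, ne_eq]; try omega)
          (by simp only [fin_val_mk, eq_self_iff_true, and_true, true_and, or_true, true_or, ne_eq]; try omega),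
        trip_pt (⟨m-1, by omega⟩ : Fin (m+1)) ⟨k-3, by omega⟩ ⟨k-1, by omega⟩ ⟨k-1, by omega⟩ ⟨m-1, by omega⟩ (by simp only [fin_val_mk, eq_self_iff_true, and_true, true_and, or_true, true_or, ne_eq]; try omega)
          (by simp only [fin_val_mk, eq_self_iff_true, and_true, true_and, or_true, true_or, ne_eq]; try omega) (by simp only [fin_val_mk, eq_self_iff_true, and_true, true_and, or_true, true_or, ne_eq]; try omega)
          (by simp only [fin_val_mk, eq_self_iff_true, and_true, true_and, or_true, true_or, ne_eq]; try omega)] at h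
    -- y * x = (0, k-1, m-1)
    have hyx : trip ⟨0, by omega⟩ ⟨k-1, by omega⟩ ⟨m-1, by omega⟩ ∈ H := by
      have h := H.mul_mem hy hx
      rwa [trip_I1 (⟨0, by omega⟩ : Fin (m+1)) ⟨k-1, by omega⟩ ⟨k+1, by omega⟩ ⟨m-1, by omega⟩
        (by simp only [fin_val_mk, eq_self_iff_true, and_true, true_and, or_true, true_or, ne_eq]; try omega) (by simp only [fin_val_mk, eq_self_iff_true, and_true, true_and, or_true, true_or, ne_eq]; try omega)
        (by simp only [fin_val_mk, eq_self_iff_true, and_true, true_and, or_true, true_or, ne_eq]; try omega) (by simp only [fin_val_mk, eq_self_iff_true, and_true, true_and, or_true, true_or, ne_eq]; try omega)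
        (by simp only [fin_val_mk, eq_self_iff_true, and_true, true_and, or_true, true_or, ne_eq]; try omega) (by simp only [fin_val_mk, eq_self_iff_true, and_true, true_and, or_true, true_or, ne_eq]; try omega)] at h
    -- θ = (0, 2, k+1)
    have hθ : trip ⟨0, by omega⟩ ⟨2, by omega⟩ ⟨k+1, by omega⟩ ∈ H := by
      have h := H.mul_mem (H.mul_mem hπ2 hyx) (H.inv_mem hπ2)
      rw [conj_trip,
        tau2_apply m 0 2 (by omega) (by omega) (by omega),
        tau2_apply m (k-1) (k+1) (by omega) (by omega) (by omega),
        tau2_apply m (m-1) 0 (by omega) (by omega) (by omega)] at h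
      rwa [trip_rot _ _ _ (by simp only [fin_val_mk, eq_self_iff_true, and_true, true_and, or_true, true_or, ne_eq]; try omega) (by simp only [fin_val_mk, eq_self_iff_true, and_true, true_and, or_true, true_or, ne_eq]; try omega)
        (by simp only [fin_val_mk, eq_self_iff_true, and_true, true_and, or_true, true_or, ne_eq]; try omega)] at h
    -- descend from (0, 2, k+1) to (0, 2, 4)
    have desc : ∀ t : ℕ, ∀ J : ℕ, (h4 : 4 ≤ J) → (hJt : J + 2*t = k + 1) →
        trip ⟨0, by omega⟩ ⟨2, by omega⟩ ⟨J, by omega⟩ ∈ H := by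
      intro t
      induction t with
      | zero =>
        intro J h4 hJ
        have hJ' : J = k + 1 := by omega
        subst hJ'
        exact hθ
      | succ t ih =>
        intro J h4 hJ
        have a1 : 4 ≤ J + 2 := by omega
        have a2 : (J+2) + 2*t = k + 1 := by omega
        have hprev := ih (J+2) a1 a2
        have hJk : J + 2 ≤ k + 1 := by omega
        -- θ₁ = (2, 4, J+4)
        have hθ1 : trip ⟨2, by omega⟩ ⟨4, by omega⟩ ⟨J+4, by omega⟩ ∈ H := by
          have h := H.mul_mem (H.mul_mem hπ2 hprev) (H.inv_mem hπ2)
          rwa [conj_trip,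
            tau2_apply m 0 2 (by omega) (by omega) (by omega),
            tau2_apply m 2 4 (by omega) (by omega) (by omega),
            tau2_apply m (J+2) (J+4) (by omega) (by omega) (by omega)] at h
        -- θprev⁻¹ = (0, J+2, 2)
        have hprevinv : trip ⟨0, by omega⟩ ⟨J+2, by omega⟩ ⟨2, by omega⟩ ∈ H := by
          have h := H.inv_mem hprev
          rwa [trip_inv _ _ _ (by simp only [fin_val_mk, eq_self_iff_true, and_true, true_and, or_true, true_or, ne_eq]; try omega)
            (by simp only [fin_val_mk, eq_self_iff_true, and_true, true_and, or_true, true_or, ne_eq]; try omega) (by simp only [fin_val_mk, eq_self_iff_true, and_true, true_and, or_true, true_or, ne_eq]; try omega)] at h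
        -- z = θ₁ * θprev⁻¹ * θ₁⁻¹ = (0, J+2, 4)
        have hz : trip ⟨0, by omega⟩ ⟨J+2, by omega⟩ ⟨4, by omega⟩ ∈ H := by
          have h := H.mul_mem (H.mul_mem hθ1 hprevinv) (H.inv_mem hθ1)
          rwa [conj_trip,
            trip_pt (⟨2, by omega⟩ : Fin (m+1)) ⟨4, by omega⟩ ⟨J+4, by omega⟩ ⟨0, by omega⟩ ⟨0, by omega⟩ (by simp only [fin_val_mk, eq_self_iff_true, and_true, true_and, or_true, true_or, ne_eq]; try omega)
          (by simp only [fin_val_mk, eq_self_iff_true, and_true, true_and, or_true, true_or, ne_eq]; try omega) (by simp only [fin_val_mk, eq_self_iff_true, and_true, true_and, or_true, true_or, ne_eq]; try omega)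
          (by simp only [fin_val_mk, eq_self_iff_true, and_true, true_and, or_true, true_or, ne_eq]; try omega),
            trip_pt (⟨2, by omega⟩ : Fin (m+1)) ⟨4, by omega⟩ ⟨J+4, by omega⟩ ⟨J+2, by omega⟩ ⟨J+2, by omega⟩ (by simp only [fin_val_mk, eq_self_iff_true, and_true, true_and, or_true, true_or, ne_eq]; try omega)
          (by simp only [fin_val_mk, eq_self_iff_true, and_true, true_and, or_true, true_or, ne_eq]; try omega) (by simp only [fin_val_mk, eq_self_iff_true, and_true, true_and, or_true, true_or, ne_eq]; try omega)
          (by simp only [fin_val_mk, eq_self_iff_true, and_true, true_and, or_true, true_or, ne_eq]; try omega),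
            trip_pt (⟨2, by omega⟩ : Fin (m+1)) ⟨4, by omega⟩ ⟨J+4, by omega⟩ ⟨2, by omega⟩ ⟨4, by omega⟩ (by simp only [fin_val_mk, eq_self_iff_true, and_true, true_and, or_true, true_or, ne_eq]; try omega)
          (by simp only [fin_val_mk, eq_self_iff_true, and_true, true_and, or_true, true_or, ne_eq]; try omega) (by simp only [fin_val_mk, eq_self_iff_true, and_true, true_and, or_true, true_or, ne_eq]; try omega)
          (by simp only [fin_val_mk, eq_self_iff_true, and_true, true_and, or_true, true_or, ne_eq]; try omega)] at h
        -- θprev * z = (2, J+2, 4)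
        have htz : trip ⟨2, by omega⟩ ⟨J+2, by omega⟩ ⟨4, by omega⟩ ∈ H := by
          have h := H.mul_mem hprev hz
          rwa [trip_I2 (⟨0, by omega⟩ : Fin (m+1)) ⟨2, by omega⟩ ⟨J+2, by omega⟩ ⟨4, by omega⟩
            (by simp only [fin_val_mk, eq_self_iff_true, and_true, true_and, or_true, true_or, ne_eq]; try omega) (by simp only [fin_val_mk, eq_self_iff_true, and_true, true_and, or_true, true_or, ne_eq]; try omega)
            (by simp only [fin_val_mk, eq_self_iff_true, and_true, true_and, or_true, true_or, ne_eq]; try omega) (by simp only [fin_val_mk, eq_self_iff_true, and_true, true_and, or_true, true_or, ne_eq]; try omega)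
            (by simp only [fin_val_mk, eq_self_iff_true, and_true, true_and, or_true, true_or, ne_eq]; try omega) (by simp only [fin_val_mk, eq_self_iff_true, and_true, true_and, or_true, true_or, ne_eq]; try omega)] at h
        -- conjugate back down : (0, J, 2)
        have hdown : trip ⟨0, by omega⟩ ⟨J, by omega⟩ ⟨2, by omega⟩ ∈ H := by
          have h := H.mul_mem (H.mul_mem (H.inv_mem hπ2) htz) (H.inv_mem (H.inv_mem hπ2))
          rwa [conj_trip,
            tau2inv_apply m 2 0 (by omega) (by omega) (by omega),
            tau2inv_apply m (J+2) J (by omega) (by omega) (by omega),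
            tau2inv_apply m 4 2 (by omega) (by omega) (by omega)] at h
        have h := H.inv_mem hdown
        rwa [trip_inv _ _ _ (by simp only [fin_val_mk, eq_self_iff_true, and_true, true_and, or_true, true_or, ne_eq]; try omega)
          (by simp only [fin_val_mk, eq_self_iff_true, and_true, true_and, or_true, true_or, ne_eq]; try omega) (by simp only [fin_val_mk, eq_self_iff_true, and_true, true_and, or_true, true_or, ne_eq]; try omega)] at h
    exact desc ((k-3)/2) 4 (by omega) (by omega)
end
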